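/- Let A be a Babelian 3×3 advantage matrix (a_{ij} = a > 0 for all i ≠ j) and let F : S₃ → S₃ be the associated Variational Learning dynamics. Then the interior fixed point (1/3, 1/3, 1/3) is asymptotically stable: there exists a relative neighbourhood U of (1/3, 1/3, 1/3) in S₃ such that for every q ∈ U the iterates Fⁿ(q) converge to (1/3, 1/3, 1/3) as n → ∞. -/

import Mathlib

open Finset Filter Topology

/-- The simplex `S₃` of probability vectors over three grammars. -/
def simplex3 : Set (Fin 3 → ℝ) :=
  {p | (∀ i, 0 ≤ p i) ∧ ∑ i, p i = 1}

/-- The penalty probability `c_i(p) = ∑_{j ≠ i} a_{ij} p_j`. -/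
def penalty (A : Matrix (Fin 3) (Fin 3) ℝ) (p : Fin 3 → ℝ) (i : Fin 3) : ℝ :=
  ∑ j ∈ Finset.univ.filter (fun j => j ≠ i), A i j * p j

/-- The Variational Learning dynamics
`F_i(p) = ∏_{j ≠ i} c_j(p) / ∑_m ∏_{k ≠ m} c_k(p)`. -/
noncomputable def VLdyn (A : Matrix (Fin 3) (Fin 3) ℝ) (p : Fin 3 → ℝ) (i : Fin 3) : ℝ :=
  (∏ j ∈ Finset.univ.filter (fun j => j ≠ i), penalty A p j) /
    (∑ m, ∏ k ∈ Finset.univ.filter (fun k => k ≠ m), penalty A p k)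

/-- The vertex `v_i` of the simplex, i.e. the state of total dominance of grammar `G_i`. -/
def vertex (i : Fin 3) : Fin 3 → ℝ := fun j => if j = i then 1 else 0

lemma filter_ne_fin3 (i : Fin 3) :
    (Finset.univ.filter (fun j => j ≠ i)) =
      if i = 0 then {1, 2} else if i = 1 then {0, 2} else {0, 1} := by
  fin_cases i <;> decide

lemma quad_bound (M X Y Z : ℝ) (hM : M ≤ 1/10) (hM0 : 0 ≤ M)
    (hX : |X| ≤ M) (hY : |Y| ≤ M) (hZ : |Z| ≤ M) (hsum : X + Y + Z = 0) :
    |2*X + X^2 + 2*(Y*Z)| ≤ 3/5*M*(4 - 3/2*(X^2+Y^2+Z^2)) := by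
  have hX' := abs_le.mp hX
  have hY' := abs_le.mp hY
  have hZ' := abs_le.mp hZ
  have hX2 : X^2 ≤ M*M := by nlinarith
  have hY2 : Y^2 ≤ M*M := by nlinarith
  have hZ2 : Z^2 ≤ M*M := by nlinarith
  have hYZ1 : Y*Z ≤ M*M := by nlinarith
  have hYZ2 : -(M*M) ≤ Y*Z := by nlinarith
  have hMM : M*M ≤ M*(1/10) := by nlinarith
  have hMX2 : M*X^2 ≤ M*(M*M) := mul_le_mul_of_nonneg_left hX2 hM0
  have hMY2 : M*Y^2 ≤ M*(M*M) := mul_le_mul_of_nonneg_left hY2 hM0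
  have hMZ2 : M*Z^2 ≤ M*(M*M) := mul_le_mul_of_nonneg_left hZ2 hM0
  have hMX2' : 0 ≤ M*X^2 := by positivity
  have hMY2' : 0 ≤ M*Y^2 := by positivity
  have hMZ2' : 0 ≤ M*Z^2 := by positivity
  have hX2' : 0 ≤ X^2 := sq_nonneg X
  have hMMM : M*(M*M) ≤ (1/100)*M := by nlinarith
  rw [abs_le]
  constructor <;> linarith

lemma key_step (a : ℝ) (ha : 0 < a) (A : Matrix (Fin 3) (Fin 3) ℝ)
    (hdiag : ∀ i, A i i = 0) (hA : ∀ i j, i ≠ j → A i j = a)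
    (q : Fin 3 → ℝ) (hsum : ∑ i, q i = 1) (M : ℝ) (hM : M ≤ 1/10)
    (hb : ∀ i, |q i - 1/3| ≤ M) :
    (∑ i, VLdyn A q i = 1) ∧ ∀ i, |VLdyn A q i - 1/3| ≤ 3/5 * M := by
  have hM0 : 0 ≤ M := le_trans (abs_nonneg _) (hb 0)
  have h0 := abs_le.mp (hb 0)
  have h1 := abs_le.mp (hb 1)
  have h2 := abs_le.mp (hb 2)
  have hs : q 0 + q 1 + q 2 = 1 := by
    simpa [Fin.sum_univ_three] using hsum
  set c0 : ℝ := 1 - q 0 with hc0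
  set c1 : ℝ := 1 - q 1 with hc1
  set c2 : ℝ := 1 - q 2 with hc2
  have hp0 : penalty A q 0 = a * c0 := by
    rw [penalty, filter_ne_fin3, if_pos rfl,
      Finset.sum_pair (by decide : (1:Fin 3) ≠ 2), hA 0 1 (by decide), hA 0 2 (by decide), hc0]
    have h : q 1 + q 2 = 1 - q 0 := by linarith
    rw [← h]; ring
  have hp1 : penalty A q 1 = a * c1 := by
    rw [penalty, filter_ne_fin3, if_neg (by decide), if_pos rfl,
      Finset.sum_pair (by decide : (0:Fin 3) ≠ 2), hA 1 0 (by decide), hA 1 2 (by decide), hc1]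
    have h : q 0 + q 2 = 1 - q 1 := by linarith
    rw [← h]; ring
  have hp2 : penalty A q 2 = a * c2 := by
    rw [penalty, filter_ne_fin3, if_neg (by decide), if_neg (by decide),
      Finset.sum_pair (by decide : (0:Fin 3) ≠ 1), hA 2 0 (by decide), hA 2 1 (by decide), hc2]
    have h : q 0 + q 1 = 1 - q 2 := by linarith
    rw [← h]; ring
  set E : ℝ := c1 * c2 + c0 * c2 + c0 * c1 with hE
  have hc0pos : (0:ℝ) < c0 := by rw [hc0]; nlinarith
  have hc1pos : (0:ℝ) < c1 := by rw [hc1]; nlinarith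
  have hc2pos : (0:ℝ) < c2 := by rw [hc2]; nlinarith
  have hEpos : (0:ℝ) < E := by positivity
  have ha2 : (a:ℝ) * a ≠ 0 := by positivity
  have hden : (∑ m, ∏ k ∈ Finset.univ.filter (fun k => k ≠ m), penalty A q k)
      = a * a * E := by
    rw [Fin.sum_univ_three, filter_ne_fin3, filter_ne_fin3, filter_ne_fin3,
      if_pos rfl, if_neg (by decide), if_pos rfl, if_neg (by decide), if_neg (by decide),
      Finset.prod_pair (by decide : (1:Fin 3) ≠ 2), Finset.prod_pair (by decide : (0:Fin 3) ≠ 2),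
      Finset.prod_pair (by decide : (0:Fin 3) ≠ 1), hp0, hp1, hp2]
    ring
  have hv0 : VLdyn A q 0 = c1 * c2 / E := by
    rw [VLdyn, hden, filter_ne_fin3, if_pos rfl,
      Finset.prod_pair (by decide : (1:Fin 3) ≠ 2), hp1, hp2]
    rw [show a * c1 * (a * c2) = a * a * (c1 * c2) by ring,
      mul_div_mul_left _ _ ha2]
  have hv1 : VLdyn A q 1 = c0 * c2 / E := by
    rw [VLdyn, hden, filter_ne_fin3, if_neg (by decide), if_pos rfl,
      Finset.prod_pair (by decide : (0:Fin 3) ≠ 2), hp0, hp2]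
    rw [show a * c0 * (a * c2) = a * a * (c0 * c2) by ring,
      mul_div_mul_left _ _ ha2]
  have hv2 : VLdyn A q 2 = c0 * c1 / E := by
    rw [VLdyn, hden, filter_ne_fin3, if_neg (by decide), if_neg (by decide),
      Finset.prod_pair (by decide : (0:Fin 3) ≠ 1), hp0, hp1]
    rw [show a * c0 * (a * c1) = a * a * (c0 * c1) by ring,
      mul_div_mul_left _ _ ha2]
  constructor
  · rw [Fin.sum_univ_three, hv0, hv1, hv2, ← add_div, ← add_div,
      ← hE, div_self (ne_of_gt hEpos)]
  · have bound : ∀ y z : ℝ, (∃ x : ℝ, x + y + z = 1 ∧ |x - 1/3| ≤ M ∧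
          E = ((1-x)*(1-y) + (1-x)*(1-z) + (1-y)*(1-z))) →
        |y - 1/3| ≤ M → |z - 1/3| ≤ M →
        |(1 - y) * (1 - z) / E - 1/3| ≤ 3/5 * M := by
      intro y z ⟨x, hxyz, hx, hEx⟩ hy hz
      have hx1 : x = 1 - y - z := by linarith
      rw [show (1 - y) * (1 - z) / E - 1/3 = (3*((1-y)*(1-z)) - E) / (3*E) by
        field_simp]
      rw [abs_div, abs_of_pos (by linarith : (0:ℝ) < 3*E),
        div_le_iff₀ (by linarith : (0:ℝ) < 3*E)]
      calc |3*((1-y)*(1-z)) - E|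
          = |2*(x-1/3) + (x-1/3)^2 + 2*((y-1/3)*(z-1/3))| := by
            rw [hEx]; congr 1; rw [hx1]; ring
        _ ≤ 3/5*M*(4 - 3/2*((x-1/3)^2+(y-1/3)^2+(z-1/3)^2)) :=
            quad_bound M (x-1/3) (y-1/3) (z-1/3) hM hM0 hx hy hz (by linarith)
        _ = 3/5 * M * (3*E) := by rw [hEx, hx1]; ring
    intro i
    fin_cases i
    · show |VLdyn A q 0 - 1/3| ≤ 3/5 * M
      rw [hv0, hc1, hc2]
      exact bound (q 1) (q 2) ⟨q 0, hs, hb 0, by rw [hE, hc0, hc1, hc2]; ring⟩ (hb 1) (hb 2)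
    · show |VLdyn A q 1 - 1/3| ≤ 3/5 * M
      rw [hv1, hc0, hc2]
      have hs' : q 0 + q 1 + q 2 = 1 := hs
      exact bound (q 0) (q 2) ⟨q 1, by linarith, hb 1, by rw [hE, hc0, hc1, hc2]; ring⟩ (hb 0) (hb 2)
    · show |VLdyn A q 2 - 1/3| ≤ 3/5 * M
      rw [hv2, hc0, hc1]
      exact bound (q 0) (q 1) ⟨q 2, by linarith, hb 2, by rw [hE, hc0, hc1, hc2]; ring⟩ (hb 0) (hb 1)

theorem stmt_11 (a : ℝ) (ha : 0 < a) (A : Matrix (Fin 3) (Fin 3) ℝ)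
    (hdiag : ∀ i, A i i = 0) (hA : ∀ i j, i ≠ j → A i j = a) :
    ∃ U ∈ 𝓝[simplex3] ![(1 : ℝ)/3, 1/3, 1/3], ∀ q ∈ U,
      Tendsto (fun n => (VLdyn A)^[n] q) atTop (𝓝 ![(1 : ℝ)/3, 1/3, 1/3]) := by
  set p : Fin 3 → ℝ := ![(1 : ℝ)/3, 1/3, 1/3] with hp
  have hpi : ∀ i, p i = 1/3 := by intro i; fin_cases i <;> norm_num [hp]
  refine ⟨simplex3 ∩ Metric.ball p (1/10), ?_, ?_⟩
  · exact Filter.inter_mem self_mem_nhdsWithin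
      (mem_nhdsWithin_of_mem_nhds (Metric.ball_mem_nhds _ (by norm_num)))
  · rintro q ⟨hq1, hq2⟩
    have hb : ∀ i, |q i - 1/3| ≤ 1/10 := by
      intro i
      have := dist_le_pi_dist q p i
      rw [Metric.mem_ball] at hq2
      rw [← hpi i, Real.dist_eq] at *
      linarith
    have hiter : ∀ n, (∑ i, (VLdyn A)^[n] q i = 1) ∧
        ∀ i, |(VLdyn A)^[n] q i - 1/3| ≤ (3/5)^n * (1/10) := by
      intro n
      induction n with
      | zero =>
        simp only [Function.iterate_zero, id_eq, pow_zero, one_mul]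
        exact ⟨hq1.2, hb⟩
      | succ n ih =>
        have hMle : ((3:ℝ)/5)^n * (1/10) ≤ 1/10 := by
          have : ((3:ℝ)/5)^n ≤ 1 := pow_le_one₀ (by norm_num) (by norm_num)
          nlinarith
        have := key_step a ha A hdiag hA _ ih.1 _ hMle ih.2
        rw [Function.iterate_succ_apply']
        refine ⟨this.1, fun i => ?_⟩
        calc |VLdyn A ((VLdyn A)^[n] q) i - 1/3| ≤ 3/5 * ((3/5)^n * (1/10)) := this.2 i
          _ = (3/5)^(n+1) * (1/10) := by ring
    rw [tendsto_pi_nhds]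
    intro i
    rw [hpi i, ← tendsto_sub_nhds_zero_iff]
    have hg : Tendsto (fun n : ℕ => ((3:ℝ)/5)^n * (1/10)) atTop (𝓝 0) := by
      have := (tendsto_pow_atTop_nhds_zero_of_lt_one (by norm_num : (0:ℝ) ≤ 3/5)
        (by norm_num : (3:ℝ)/5 < 1)).mul_const (1/10 : ℝ)
      simpa using this
    exact squeeze_zero_norm (fun n => (hiter n).2 i) hg
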